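/- Let n ≥ 4 be even, let 1 ≤ k < n/2 be an integer, and let A be any real matrix with n columns whose null space equals the span of the all-ones vector 𝟙 ∈ ℝⁿ. Set C' = (n−k)/k and K = {1,…,k}. Let x ∈ ℝⁿ be the vector whose first n/2 entries are −1 and whose remaining entries are 0, and let x̂ ∈ ℝⁿ be the vector whose first n/2 entries are 0 and whose last n/2 entries are 1. Then: (i) x̂ is an ℓ1 minimizer for (A, x); (ii) the null space vector w = 𝟙 satisfies C'·‖w_K‖₁ = ‖w_K̄‖₁, so the condition C·‖w_K‖₁ ≤ ‖w_K̄‖₁ fails for every C > C'; (iii) ‖x − x̂‖₁ = (2(C'+1)/(C'−1))·‖x_K̄‖₁, and consequently ‖x − x̂‖₁ > (2(C+1)/(C−1))·‖x_K̄‖₁ for every C > C'. -/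

import Mathlib

/-- The ℓ1 norm of a vector in ℝⁿ. -/
noncomputable def l1 {n : ℕ} (x : Fin n → ℝ) : ℝ := ∑ i, |x i|

/-- The restriction of a vector to the coordinates in `K` (zero outside `K`). -/
def restr {n : ℕ} (K : Finset (Fin n)) (x : Fin n → ℝ) : Fin n → ℝ :=
  fun i => if i ∈ K then x i else 0

lemma l1_eq_range {n : ℕ} (f : Fin n → ℝ) (g : ℕ → ℝ)
    (h : ∀ i : Fin n, |f i| = g (i : ℕ)) :
    l1 f = ∑ j ∈ Finset.range n, g j := by
  unfold l1
  rw [← Fin.sum_univ_eq_sum_range g n]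
  exact Finset.sum_congr rfl (fun i _ => h i)

lemma sum_if_lt (n t : ℕ) (ht : t ≤ n) (a b : ℝ) :
    ∑ j ∈ Finset.range n, (if j < t then a else b)
      = (t : ℝ) * a + ((n - t : ℕ) : ℝ) * b := by
  rw [Finset.sum_ite]
  have h1 : (Finset.range n).filter (fun j => j < t) = Finset.range t := by
    ext j; simp; omega
  have h2 : (Finset.range n).filter (fun j => ¬ j < t) = Finset.Ico t n := by
    ext j; simp; omega
  rw [h1, h2]
  simp [mul_comm]

lemma sum_if_ico (n s t : ℕ) (ht : t ≤ n) :
    ∑ j ∈ Finset.range n, (if s ≤ j ∧ j < t then (1:ℝ) else 0)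
      = ((t - s : ℕ) : ℝ) := by
  rw [Finset.sum_ite, Finset.sum_const, Finset.sum_const]
  have h1 : (Finset.range n).filter (fun j => s ≤ j ∧ j < t) = Finset.Ico s t := by
    ext j; simp; omega
  rw [h1]
  simp

theorem stmt_1 {m n : ℕ} (hn4 : 4 ≤ n) (hne : Even n)
    (k : ℕ) (hk1 : 1 ≤ k) (hk2 : k < n / 2)
    (A : Matrix (Fin m) (Fin n) ℝ)
    -- the null space of `A` equals the span of the all-ones vector
    (hnull : ∀ w : Fin n → ℝ, A.mulVec w = 0 ↔ ∃ c : ℝ, w = fun _ => c)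
    (C' : ℝ) (hC' : C' = ((n : ℝ) - k) / k)
    (K : Finset (Fin n)) (hK : K = Finset.univ.filter (fun i : Fin n => (i : ℕ) < k))
    (x : Fin n → ℝ) (hx : x = fun i : Fin n => if (i : ℕ) < n / 2 then (-1:ℝ) else 0)
    (xh : Fin n → ℝ) (hxh : xh = fun i : Fin n => if (i : ℕ) < n / 2 then (0:ℝ) else 1) :
    -- (i) `xh` is an ℓ1 minimizer for (A, x)
    (A.mulVec xh = A.mulVec x ∧
      ∀ z : Fin n → ℝ, A.mulVec z = A.mulVec x → l1 xh ≤ l1 z) ∧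
    -- (ii) the all-ones null space vector tightly violates the balancedness condition
    (C' * l1 (restr K (fun _ => 1)) = l1 (restr Kᶜ (fun _ => 1)) ∧
      ∀ C : ℝ, C' < C →
        ¬ (C * l1 (restr K (fun _ => 1)) ≤ l1 (restr Kᶜ (fun _ => 1)))) ∧
    -- (iii) the recovery error bound is tightly violated
    (l1 (x - xh) = (2 * (C' + 1) / (C' - 1)) * l1 (restr Kᶜ x) ∧
      ∀ C : ℝ, C' < C →
        l1 (x - xh) > (2 * (C + 1) / (C - 1)) * l1 (restr Kᶜ x)) := by
  subst hC' hK hx hxh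
  set m0 : ℕ := n / 2 with hm0
  have hn2 : m0 * 2 = n := Nat.div_mul_cancel hne.two_dvd
  have hkn : k ≤ n := by omega
  have hm0n : m0 ≤ n := by omega
  have hkr0 : (0:ℝ) < (k:ℝ) := by exact_mod_cast hk1
  have h2k : 2 * (k:ℝ) < (n:ℝ) := by exact_mod_cast (by omega : 2 * k < n)
  have hC1 : (1:ℝ) < ((n:ℝ) - k) / k := by
    rw [lt_div_iff₀ hkr0]; linarith
  -- membership in K
  have hmemK : ∀ i : Fin n,
      (i ∈ Finset.univ.filter (fun i : Fin n => (i : ℕ) < k)) ↔ (i : ℕ) < k := by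
    intro i; simp
  -- l1 computations
  have e1 : l1 (restr (Finset.univ.filter (fun i : Fin n => (i : ℕ) < k)) (fun _ => 1))
      = (k:ℝ) := by
    rw [l1_eq_range _ (fun j => if j < k then (1:ℝ) else 0)
      (by intro i; simp only [restr, hmemK]; by_cases h : (i:ℕ) < k <;> simp [h])]
    rw [sum_if_lt n k hkn]; ring
  have e2 : l1 (restr (Finset.univ.filter (fun i : Fin n => (i : ℕ) < k))ᶜ (fun _ => 1))
      = ((n:ℝ) - k) := by
    rw [l1_eq_range _ (fun j => if j < k then (0:ℝ) else 1)
      (by intro i; simp only [restr, Finset.mem_compl, hmemK]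
          by_cases h : (i:ℕ) < k <;> simp [h])]
    rw [sum_if_lt n k hkn]
    push_cast [Nat.cast_sub hkn]; ring
  have e3 : l1 ((fun i : Fin n => if (i : ℕ) < m0 then (-1:ℝ) else 0)
      - (fun i : Fin n => if (i : ℕ) < m0 then (0:ℝ) else 1)) = (n:ℝ) := by
    rw [l1_eq_range _ (fun _ => (1:ℝ))
      (by intro i; simp only [Pi.sub_apply]; split <;> norm_num)]
    simp
  have e4 : l1 (fun i : Fin n => if (i : ℕ) < m0 then (0:ℝ) else 1)
      = ((m0:ℕ) : ℝ) := by
    rw [l1_eq_range _ (fun j => if j < m0 then (0:ℝ) else 1)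
      (by intro i; by_cases h : (i:ℕ) < m0 <;> simp [h])]
    rw [sum_if_lt n m0 hm0n]
    have : n - m0 = m0 := by omega
    rw [this]; ring
  have e5 : l1 (restr (Finset.univ.filter (fun i : Fin n => (i : ℕ) < k))ᶜ
      (fun i : Fin n => if (i : ℕ) < m0 then (-1:ℝ) else 0)) = ((m0 - k : ℕ) : ℝ) := by
    rw [l1_eq_range _ (fun j => if k ≤ j ∧ j < m0 then (1:ℝ) else 0)
      (by intro i; simp only [restr, Finset.mem_compl, hmemK]
          by_cases h1 : (i:ℕ) < k
          · rw [if_neg (not_not_intro h1), abs_zero, if_neg (by omega)]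
          · by_cases h2 : (i:ℕ) < m0
            · rw [if_pos h1, if_pos h2, if_pos ⟨by omega, h2⟩]; norm_num
            · rw [if_pos h1, if_neg h2, if_neg (by omega)]; norm_num)]
    exact sum_if_ico n k m0 hm0n
  have hmk : ((m0 - k : ℕ) : ℝ) = (n:ℝ)/2 - k := by
    push_cast [Nat.cast_sub (le_of_lt hk2)]
    have : (m0 : ℝ) = (n:ℝ)/2 := by
      field_simp; exact_mod_cast hn2
    rw [this]
  refine ⟨⟨?_, ?_⟩, ⟨?_, ?_⟩, ?_, ?_⟩
  · -- A xh = A x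
    have h0 : A.mulVec ((fun i : Fin n => if (i : ℕ) < m0 then (0:ℝ) else 1)
        - (fun i : Fin n => if (i : ℕ) < m0 then (-1:ℝ) else 0)) = 0 := by
      rw [hnull]
      exact ⟨1, funext fun i => by simp only [Pi.sub_apply]; split <;> norm_num⟩
    rw [Matrix.mulVec_sub, sub_eq_zero] at h0
    exact h0
  · -- minimizer
    intro z hz
    have h0 : A.mulVec (z - (fun i : Fin n => if (i : ℕ) < m0 then (-1:ℝ) else 0)) = 0 := by
      rw [Matrix.mulVec_sub, sub_eq_zero]; exact hz
    obtain ⟨c, hc⟩ := (hnull _).1 h0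
    have hzc : z = fun i : Fin n => (if (i : ℕ) < m0 then (-1:ℝ) else 0) + c := by
      funext i
      have := congrFun hc i
      simp only [Pi.sub_apply] at this
      linarith
    rw [hzc, e4]
    have hlz : l1 (fun i : Fin n => (if (i : ℕ) < m0 then (-1:ℝ) else 0) + c)
        = (m0:ℝ) * |c - 1| + ((n - m0 : ℕ) : ℝ) * |c| := by
      rw [l1_eq_range _ (fun j => if j < m0 then |c - 1| else |c|)
        (by intro i
            by_cases h : (i:ℕ) < m0
            · simp only [h, if_true]
              congr 1; ring
            · simp only [h, if_false, zero_add])]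
      exact sum_if_lt n m0 hm0n _ _
    rw [hlz]
    have hnm : ((n - m0 : ℕ) : ℝ) = (m0 : ℝ) := by
      have : n - m0 = m0 := by omega
      rw [this]
    rw [hnm]
    have habs : (1:ℝ) ≤ |c - 1| + |c| := by
      rcases abs_cases c with ⟨h1, h2⟩ | ⟨h1, h2⟩ <;>
        rcases abs_cases (c - 1) with ⟨h3, h4⟩ | ⟨h3, h4⟩ <;> linarith
    have hm0pos : (0:ℝ) ≤ (m0:ℝ) := by positivity
    nlinarith
  · rw [e1, e2, div_mul_cancel₀ _ (ne_of_gt hkr0)]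
  · intro C hC
    rw [e1, e2, not_le]
    have : ((n:ℝ) - k) / k * k < C * k := by
      exact mul_lt_mul_of_pos_right hC hkr0
    rw [div_mul_cancel₀ _ (ne_of_gt hkr0)] at this
    linarith
  · rw [e3, e5, hmk]
    have hd : ((n:ℝ) - k) / k - 1 = ((n:ℝ) - 2*k) / k := by field_simp; ring
    have hs : ((n:ℝ) - k) / k + 1 = (n:ℝ) / k := by field_simp; ring
    have hnk2 : (n:ℝ) - 2*k ≠ 0 := by linarith
    rw [hd, hs, ← mul_div_assoc, div_div_eq_mul_div, div_mul_cancel₀ _ (ne_of_gt hkr0),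
      div_mul_eq_mul_div, eq_comm, div_eq_iff hnk2]
    ring
  · intro C hC
    rw [e3, e5, hmk]
    have hC1' : (1:ℝ) < C := lt_trans hC1 hC
    have hpos : (0:ℝ) < (n:ℝ)/2 - k := by linarith
    have key : (n:ℝ) = 2 * (((n:ℝ) - k) / k + 1) / (((n:ℝ) - k) / k - 1) * ((n:ℝ)/2 - k) := by
      have hd : ((n:ℝ) - k) / k - 1 = ((n:ℝ) - 2*k) / k := by field_simp; ring
      have hs : ((n:ℝ) - k) / k + 1 = (n:ℝ) / k := by field_simp; ring
      have hnk2 : (n:ℝ) - 2*k ≠ 0 := by linarith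
      rw [hd, hs, ← mul_div_assoc, div_div_eq_mul_div, div_mul_cancel₀ _ (ne_of_gt hkr0),
        div_mul_eq_mul_div, eq_comm, div_eq_iff hnk2]
      ring
    rw [gt_iff_lt]
    conv_rhs => rw [key]
    apply mul_lt_mul_of_pos_right _ hpos
    rw [div_lt_div_iff₀ (by linarith) (by linarith)]
    nlinarith
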